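/- Let H be a Hopf algebra over a field k with antipode S, M an H-tetramodule, and f : M → H an H-bimodule map which is a coderivation (so that f : M → H is a Hopf algebra object in the Loday–Pirashvili category of linear maps). Then: (1) f restricts to a map f̃ : ⁱⁿᵛM → ker ε on the left-invariants ⁱⁿᵛM := {m ∈ M : m₍₋₁₎ ⊗ m₍₀₎ = 1 ⊗ m}, and f̃ is a morphism of Yetter–Drinfel'd modules over H, where ⁱⁿᵛM carries the right adjoint action m ⊳ h := S(h₍₁₎) m h₍₂₎ and the right coaction restricted from M, and ker ε carries the right adjoint action and the coaction Δ̃(h) = h₍₁₎ ⊗ h₍₂₎ − 1 ⊗ h; (2) the operation x ◁ y := x ⊳ f̃(y) = S(f̃(y)₍₁₎) x f̃(y)₍₂₎ together with the Yetter–Drinfel'd braiding τ(x ⊗ y) = y₍₀₎ ⊗ x ⊳ y₍₁₎ turns ⁱⁿᵛM into a braided Leibniz algebra: (x ◁ y) ◁ z = x ◁ (y ◁ z) + (x ◁ z⟨1⟩) ◁ y⟨2⟩ for all x, y, z ∈ ⁱⁿᵛM, where τ(y ⊗ z) = z⟨1⟩ ⊗ y⟨2⟩. -/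

import Mathlib

open TensorProduct LinearMap

section Defs

variable (k H M : Type) [Field k] [Ring H] [HopfAlgebra k H]
  [AddCommGroup M] [Module k M]

/-- The right adjoint action `m ⊗ h ↦ S(h₍₁₎) m h₍₂₎` on an `H`-bimodule `M` with
left action `lact` and right action `ract`. -/
noncomputable def adActM (lact : H ⊗[k] M →ₗ[k] M) (ract : M ⊗[k] H →ₗ[k] M) :
    M ⊗[k] H →ₗ[k] M :=
  ract
  ∘ₗ (rTensor H (lact ∘ₗ (TensorProduct.comm k M H).toLinearMap))
  ∘ₗ (TensorProduct.assoc k M H H).symm.toLinearMap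
  ∘ₗ (lTensor M (rTensor H (HopfAlgebra.antipode (R := k))))
  ∘ₗ (lTensor M (Coalgebra.comul (R := k)))

/-- The right adjoint action `g ⊗ h ↦ S(h₍₁₎) g h₍₂₎` of `H` on itself. -/
noncomputable def adActH : H ⊗[k] H →ₗ[k] H :=
  adActM k H H (LinearMap.mul' k H) (LinearMap.mul' k H)

/-- Diagonal left `H`-action on `H ⊗ M`: `g ⊗ (a ⊗ m) ↦ g₍₁₎a ⊗ g₍₂₎m`. -/
noncomputable def diagLHM (lact : H ⊗[k] M →ₗ[k] M) :
    H ⊗[k] (H ⊗[k] M) →ₗ[k] H ⊗[k] M :=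
  (TensorProduct.map (LinearMap.mul' k H) lact)
  ∘ₗ (TensorProduct.tensorTensorTensorComm k H H H M).toLinearMap
  ∘ₗ (rTensor (H ⊗[k] M) (Coalgebra.comul (R := k)))

/-- Diagonal right `H`-action on `H ⊗ M`: `(a ⊗ m) ⊗ g ↦ ag₍₁₎ ⊗ mg₍₂₎`. -/
noncomputable def diagRHM (ract : M ⊗[k] H →ₗ[k] M) :
    (H ⊗[k] M) ⊗[k] H →ₗ[k] H ⊗[k] M :=
  (TensorProduct.map (LinearMap.mul' k H) ract)
  ∘ₗ (TensorProduct.tensorTensorTensorComm k H M H H).toLinearMap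
  ∘ₗ (lTensor (H ⊗[k] M) (Coalgebra.comul (R := k)))

/-- Diagonal left `H`-action on `M ⊗ H`: `g ⊗ (m ⊗ a) ↦ g₍₁₎m ⊗ g₍₂₎a`. -/
noncomputable def diagLMH (lact : H ⊗[k] M →ₗ[k] M) :
    H ⊗[k] (M ⊗[k] H) →ₗ[k] M ⊗[k] H :=
  (TensorProduct.map lact (LinearMap.mul' k H))
  ∘ₗ (TensorProduct.tensorTensorTensorComm k H H M H).toLinearMap
  ∘ₗ (rTensor (M ⊗[k] H) (Coalgebra.comul (R := k)))

/-- Diagonal right `H`-action on `M ⊗ H`: `(m ⊗ a) ⊗ g ↦ mg₍₁₎ ⊗ ag₍₂₎`. -/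
noncomputable def diagRMH (ract : M ⊗[k] H →ₗ[k] M) :
    (M ⊗[k] H) ⊗[k] H →ₗ[k] M ⊗[k] H :=
  (TensorProduct.map ract (LinearMap.mul' k H))
  ∘ₗ (TensorProduct.tensorTensorTensorComm k M H H H).toLinearMap
  ∘ₗ (lTensor (M ⊗[k] H) (Coalgebra.comul (R := k)))

end Defs


section ConvFramework

variable {k : Type} [Field k]
variable {C A : Type} [AddCommGroup C] [Module k C] [Coalgebra k C]
  [Ring A] [Algebra k A]

/-- Convolution product on linear maps from a coalgebra to an algebra. -/
noncomputable def myconv (f g : C →ₗ[k] A) : C →ₗ[k] A :=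
  LinearMap.mul' k A ∘ₗ TensorProduct.map f g ∘ₗ Coalgebra.comul

lemma myconv_apply {ι : Type*} (f g : C →ₗ[k] A) (c : C) (r : Coalgebra.Repr k c ι) :
    myconv f g c = ∑ i ∈ r.index, f (r.left i) * g (r.right i) := by
  simp only [myconv, comp_apply, ← r.eq, map_sum, TensorProduct.map_tmul, mul'_apply]

/-- Convolution unit. -/
noncomputable def myconvOne : C →ₗ[k] A := Algebra.linearMap k A ∘ₗ Coalgebra.counit

lemma myconvOne_apply (c : C) :
    myconvOne (k := k) (C := C) (A := A) c = algebraMap k A (Coalgebra.counit c) := rfl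

lemma sum_counit_smul {ι : Type*} (c : C) (r : Coalgebra.Repr k c ι) :
    ∑ i ∈ r.index, Coalgebra.counit (R := k) (r.left i) • r.right i = c := by
  have h := Coalgebra.sum_counit_tmul_eq r
  calc ∑ i ∈ r.index, Coalgebra.counit (R := k) (r.left i) • r.right i
      = TensorProduct.lid k C (∑ i ∈ r.index,
          Coalgebra.counit (R := k) (r.left i) ⊗ₜ[k] r.right i) := by
        rw [map_sum]; rfl
    _ = TensorProduct.lid k C ((1:k) ⊗ₜ[k] c) := by rw [h]
    _ = c := by simp

lemma sum_smul_counit {ι : Type*} (c : C) (r : Coalgebra.Repr k c ι) :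
    ∑ i ∈ r.index, Coalgebra.counit (R := k) (r.right i) • r.left i = c := by
  have h := Coalgebra.sum_tmul_counit_eq r
  calc ∑ i ∈ r.index, Coalgebra.counit (R := k) (r.right i) • r.left i
      = TensorProduct.rid k C (∑ i ∈ r.index,
          r.left i ⊗ₜ[k] Coalgebra.counit (R := k) (r.right i)) := by
        rw [map_sum]; rfl
    _ = TensorProduct.rid k C (c ⊗ₜ[k] (1:k)) := by rw [h]
    _ = c := by simp

lemma myconv_one_left (f : C →ₗ[k] A) : myconv myconvOne f = f := by
  ext c
  have r := Coalgebra.Repr.arbitrary k c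
  rw [myconv_apply _ _ c r]
  calc ∑ i ∈ r.index, myconvOne (r.left i) * f (r.right i)
      = ∑ i ∈ r.index, Coalgebra.counit (R := k) (r.left i) • f (r.right i) := by
        refine Finset.sum_congr rfl fun i _ => ?_
        rw [myconvOne_apply, ← Algebra.smul_def]
    _ = f (∑ i ∈ r.index, Coalgebra.counit (R := k) (r.left i) • r.right i) := by
        rw [map_sum]; simp
    _ = f c := by rw [sum_counit_smul]

lemma myconv_one_right (f : C →ₗ[k] A) : myconv f myconvOne = f := by
  ext c
  have r := Coalgebra.Repr.arbitrary k c
  rw [myconv_apply _ _ c r]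
  calc ∑ i ∈ r.index, f (r.left i) * myconvOne (r.right i)
      = ∑ i ∈ r.index, Coalgebra.counit (R := k) (r.right i) • f (r.left i) := by
        refine Finset.sum_congr rfl fun i _ => ?_
        rw [myconvOne_apply, ← Algebra.commutes, ← Algebra.smul_def]
    _ = f (∑ i ∈ r.index, Coalgebra.counit (R := k) (r.right i) • r.left i) := by
        rw [map_sum]; simp
    _ = f c := by rw [sum_smul_counit]

lemma myconv_assoc (f g h : C →ₗ[k] A) :
    myconv (myconv f g) h = myconv f (myconv g h) := by
  ext c
  have r := Coalgebra.Repr.arbitrary k c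
  have a : ∀ i : C × C, Coalgebra.Repr k (r.left i) (C × C) := fun i => Coalgebra.Repr.arbitrary k _
  have b : ∀ i : C × C, Coalgebra.Repr k (r.right i) (C × C) := fun i => Coalgebra.Repr.arbitrary k _
  have key := Coalgebra.sum_map_tmul_tmul_eq (R := k) f g h c (repr := r) (a₁ := a) (a₂ := b)
  apply_fun (LinearMap.mul' k A ∘ₗ lTensor A (LinearMap.mul' k A)) at key
  simp only [map_sum, comp_apply, lTensor_tmul, mul'_apply] at key
  rw [myconv_apply _ _ c r, myconv_apply _ _ c r]
  calc ∑ i ∈ r.index, myconv f g (r.left i) * h (r.right i)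
      = ∑ i ∈ r.index, ∑ j ∈ (a i).index,
          f ((a i).left j) * (g ((a i).right j) * h (r.right i)) := by
        refine Finset.sum_congr rfl fun i _ => ?_
        rw [myconv_apply _ _ _ (a i), Finset.sum_mul]
        exact Finset.sum_congr rfl fun j _ => mul_assoc _ _ _
    _ = ∑ i ∈ r.index, ∑ j ∈ (b i).index,
          f (r.left i) * (g ((b i).left j) * h ((b i).right j)) := key.symm
    _ = ∑ i ∈ r.index, f (r.left i) * myconv g h (r.right i) := by
        refine Finset.sum_congr rfl fun i _ => ?_
        rw [myconv_apply _ _ _ (b i), Finset.mul_sum]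

lemma myconv_inv_unique {f m g : C →ₗ[k] A} (h1 : myconv f m = myconvOne)
    (h2 : myconv m g = myconvOne) : f = g := by
  calc f = myconv f myconvOne := (myconv_one_right f).symm
    _ = myconv f (myconv m g) := by rw [h2]
    _ = myconv (myconv f m) g := (myconv_assoc f m g).symm
    _ = myconv myconvOne g := by rw [h1]
    _ = g := myconv_one_left g

end ConvFramework


section HopfAux

variable {k H : Type} [Field k] [Ring H] [HopfAlgebra k H]

lemma tpComul_tmul (u v : H) :
    Coalgebra.comul (R := k) (u ⊗ₜ[k] v)
      = tensorTensorTensorComm k H H H H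
          (Coalgebra.comul (R := k) u ⊗ₜ[k] Coalgebra.comul (R := k) v) := by
  have h := congr($(Bialgebra.TensorProduct.comul_eq_algHom_toLinearMap k k H H) (u ⊗ₜ[k] v))
  simp only [AlgHom.toLinearMap_apply, AlgHom.coe_comp, Function.comp_apply,
    Algebra.TensorProduct.map_tmul] at h
  rw [h]; rfl

lemma tpCounit_tmul (u v : H) :
    Coalgebra.counit (R := k) (u ⊗ₜ[k] v)
      = Coalgebra.counit (R := k) u * Coalgebra.counit (R := k) v := by
  have h := congr($(Bialgebra.TensorProduct.counit_eq_algHom_toLinearMap k k H H) (u ⊗ₜ[k] v))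
  simp only [AlgHom.toLinearMap_apply, AlgHom.coe_comp, Function.comp_apply,
    Algebra.TensorProduct.map_tmul] at h
  rw [h]
  simp [Algebra.TensorProduct.lmul'_apply_tmul, Bialgebra.counitAlgHom_apply, mul_comm]

/-- A representation of the coproduct of a simple tensor in `H ⊗ H`. -/
noncomputable def reprTmul {ι κ : Type*} {u v : H} (ru : Coalgebra.Repr k u ι)
    (rv : Coalgebra.Repr k v κ) :
    Coalgebra.Repr k (u ⊗ₜ[k] v) (ι × κ) where
  index := ru.index ×ˢ rv.index
  left := fun p => ru.left p.1 ⊗ₜ[k] rv.left p.2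
  right := fun p => ru.right p.1 ⊗ₜ[k] rv.right p.2
  eq := by
    rw [tpComul_tmul, ← ru.eq, ← rv.eq, Finset.sum_product]
    rw [TensorProduct.sum_tmul]
    rw [map_sum]
    refine Finset.sum_congr rfl fun i _ => ?_
    rw [TensorProduct.tmul_sum, map_sum]
    refine Finset.sum_congr rfl fun j _ => ?_
    rw [tensorTensorTensorComm_tmul]

lemma antipode_mul_linear :
    (HopfAlgebra.antipode (R := k) (A := H)) ∘ₗ LinearMap.mul' k H
      = LinearMap.mul' k H
          ∘ₗ TensorProduct.map (HopfAlgebra.antipode (R := k)) (HopfAlgebra.antipode (R := k))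
          ∘ₗ (TensorProduct.comm k H H).toLinearMap := by
  refine myconv_inv_unique (m := LinearMap.mul' k H) ?_ ?_
  · apply TensorProduct.ext'
    intro u v
    have ru := Coalgebra.Repr.arbitrary k u
    have rv := Coalgebra.Repr.arbitrary k v
    rw [myconv_apply _ _ _ (reprTmul ru rv)]
    have key : ∑ p ∈ ru.index ×ˢ rv.index,
        (ru.left p.1 * rv.left p.2) ⊗ₜ[k] (ru.right p.1 * rv.right p.2)
        = Coalgebra.comul (R := k) (u * v) := by
      rw [Bialgebra.comul_mul, ← ru.eq, ← rv.eq, Finset.sum_mul_sum, Finset.sum_product]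
      simp [Algebra.TensorProduct.tmul_mul_tmul]
    apply_fun (LinearMap.mul' k H ∘ₗ rTensor H (HopfAlgebra.antipode (R := k))) at key
    simp only [map_sum, comp_apply, rTensor_tmul, mul'_apply] at key
    rw [HopfAlgebra.mul_antipode_rTensor_comul_apply] at key
    calc ∑ p ∈ ru.index ×ˢ rv.index,
        ((HopfAlgebra.antipode (R := k) (A := H)) ∘ₗ LinearMap.mul' k H)
          ((reprTmul ru rv).left p) * (LinearMap.mul' k H) ((reprTmul ru rv).right p)
        = ∑ p ∈ ru.index ×ˢ rv.index,
            HopfAlgebra.antipode (R := k) (ru.left p.1 * rv.left p.2)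
              * (ru.right p.1 * rv.right p.2) := by
          refine Finset.sum_congr rfl fun p _ => ?_
          simp [reprTmul, mul'_apply]
      _ = algebraMap k H (Coalgebra.counit (R := k) (u * v)) := key
      _ = myconvOne (u ⊗ₜ[k] v) := by
          rw [myconvOne_apply, tpCounit_tmul, Bialgebra.counit_mul]
  · apply TensorProduct.ext'
    intro u v
    have ru := Coalgebra.Repr.arbitrary k u
    have rv := Coalgebra.Repr.arbitrary k v
    rw [myconv_apply _ _ _ (reprTmul ru rv)]
    calc ∑ p ∈ ru.index ×ˢ rv.index,
        (LinearMap.mul' k H) ((reprTmul ru rv).left p)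
          * ((LinearMap.mul' k H
              ∘ₗ TensorProduct.map (HopfAlgebra.antipode (R := k)) (HopfAlgebra.antipode (R := k))
              ∘ₗ (TensorProduct.comm k H H).toLinearMap) ((reprTmul ru rv).right p))
        = ∑ i ∈ ru.index, ∑ j ∈ rv.index,
            ru.left i * ((rv.left j * HopfAlgebra.antipode (R := k) (rv.right j))
              * HopfAlgebra.antipode (R := k) (ru.right i)) := by
          rw [Finset.sum_product]
          refine Finset.sum_congr rfl fun i _ => Finset.sum_congr rfl fun j _ => ?_
          simp only [reprTmul, comp_apply, LinearEquiv.coe_coe, comm_tmul,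
            TensorProduct.map_tmul, mul'_apply]
          simp [mul_assoc]
      _ = ∑ i ∈ ru.index,
            ru.left i * ((Coalgebra.counit (R := k) v • (1:H))
              * HopfAlgebra.antipode (R := k) (ru.right i)) := by
          refine Finset.sum_congr rfl fun i _ => ?_
          rw [← HopfAlgebra.sum_mul_antipode_eq_smul rv, Finset.sum_mul, Finset.mul_sum]
      _ = Coalgebra.counit (R := k) v •
            ∑ i ∈ ru.index, ru.left i * HopfAlgebra.antipode (R := k) (ru.right i) := by
          rw [Finset.smul_sum]
          refine Finset.sum_congr rfl fun i _ => ?_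
          rw [smul_mul_assoc, one_mul, mul_smul_comm]
      _ = myconvOne (u ⊗ₜ[k] v) := by
          rw [HopfAlgebra.sum_mul_antipode_eq_smul ru, myconvOne_apply, tpCounit_tmul,
            smul_smul, mul_comm, Algebra.algebraMap_eq_smul_one]

lemma antipode_mul (a b : H) :
    HopfAlgebra.antipode (R := k) (a * b)
      = HopfAlgebra.antipode (R := k) (A := H) b * HopfAlgebra.antipode (R := k) a := by
  have := congr($(antipode_mul_linear (k := k) (H := H)) (a ⊗ₜ[k] b))
  simpa using this

end HopfAux

section HopfAux2

variable {k H : Type} [Field k] [Ring H] [HopfAlgebra k H]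

lemma collapse3 {V : Type} [AddCommGroup V] [Module k V] (Q : H →ₗ[k] V) (w : H)
    {ι : Type*} (rw : Coalgebra.Repr k w ι) (c : ∀ l : ι, Coalgebra.Repr k (rw.right l) (H × H)) :
    ∑ l ∈ rw.index, ∑ m ∈ (c l).index,
      (HopfAlgebra.antipode (R := k) (rw.left l) * (c l).left m) ⊗ₜ[k] Q ((c l).right m)
      = (1:H) ⊗ₜ[k] Q w := by
  have key := Coalgebra.sum_tmul_tmul_eq rw (fun l => Coalgebra.Repr.arbitrary k (rw.left l)) c
  apply_fun (TensorProduct.map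
      (LinearMap.mul' k H ∘ₗ rTensor H (HopfAlgebra.antipode (R := k))) Q
      ∘ₗ (TensorProduct.assoc k H H H).symm.toLinearMap) at key
  simp only [map_sum, comp_apply, LinearEquiv.coe_coe, TensorProduct.assoc_symm_tmul,
    TensorProduct.map_tmul, rTensor_tmul, mul'_apply] at key
  rw [← key]
  calc ∑ l ∈ rw.index, ∑ j ∈ (Coalgebra.Repr.arbitrary k (rw.left l)).index,
      (HopfAlgebra.antipode (R := k) ((Coalgebra.Repr.arbitrary k (rw.left l)).left j)
        * (Coalgebra.Repr.arbitrary k (rw.left l)).right j) ⊗ₜ[k] Q (rw.right l)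
      = ∑ l ∈ rw.index,
          (Coalgebra.counit (R := k) (rw.left l) • (1:H)) ⊗ₜ[k] Q (rw.right l) := by
        refine Finset.sum_congr rfl fun l _ => ?_
        rw [← TensorProduct.sum_tmul, HopfAlgebra.sum_antipode_mul_eq_smul]
    _ = ∑ l ∈ rw.index,
          (1:H) ⊗ₜ[k] Q (Coalgebra.counit (R := k) (rw.left l) • rw.right l) := by
        refine Finset.sum_congr rfl fun l _ => ?_
        rw [TensorProduct.smul_tmul, map_smul]
    _ = (1:H) ⊗ₜ[k] Q w := by
        rw [← TensorProduct.tmul_sum, ← map_sum, sum_counit_smul]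

lemma fourLeg {V : Type} [AddCommGroup V] [Module k V] (P : H ⊗[k] H →ₗ[k] V) (h : H)
    {ι : Type*} (r : Coalgebra.Repr k h ι) (a : ∀ i : ι, Coalgebra.Repr k (r.left i) (H × H))
    (b : ∀ i : ι, Coalgebra.Repr k (r.right i) (H × H)) :
    ∑ i ∈ r.index, ∑ j ∈ (a i).index, ∑ l ∈ (b i).index,
      (HopfAlgebra.antipode (R := k) ((a i).right j) * (b i).left l)
        ⊗ₜ[k] P ((a i).left j ⊗ₜ[k] (b i).right l)
      = (1:H) ⊗ₜ[k] P (Coalgebra.comul (R := k) h) := by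
  -- the map x ⊗ (y ⊗ (c ⊗ d)) ↦ (S y * c) ⊗ P (x ⊗ d)
  set Y : H ⊗[k] (H ⊗[k] (H ⊗[k] H)) →ₗ[k] H ⊗[k] V :=
    TensorProduct.map (LinearMap.mul' k H ∘ₗ rTensor H (HopfAlgebra.antipode (R := k))) P
      ∘ₗ (tensorTensorTensorComm k H H H H).toLinearMap
      ∘ₗ rTensor (H ⊗[k] H) (TensorProduct.comm k H H).toLinearMap
      ∘ₗ (TensorProduct.assoc k H H (H ⊗[k] H)).symm.toLinearMap with hY
  have hYtmul : ∀ (x y c d : H), Y (x ⊗ₜ[k] (y ⊗ₜ[k] (c ⊗ₜ[k] d)))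
      = (HopfAlgebra.antipode (R := k) y * c) ⊗ₜ[k] P (x ⊗ₜ[k] d) := by
    intro x y c d
    simp [hY, mul'_apply]
  have key := Coalgebra.sum_tmul_tmul_eq r a b
  apply_fun (Y ∘ₗ lTensor H (lTensor H (Coalgebra.comul (R := k) (A := H)))) at key
  simp only [map_sum, comp_apply, lTensor_tmul] at key
  -- rewrite the LHS of key into the LHS of the goal
  have hL : ∀ i ∈ r.index, ∀ j ∈ (a i).index,
      Y ((a i).left j ⊗ₜ[k] ((a i).right j ⊗ₜ[k] Coalgebra.comul (R := k) (r.right i)))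
        = ∑ l ∈ (b i).index,
            (HopfAlgebra.antipode (R := k) ((a i).right j) * (b i).left l)
              ⊗ₜ[k] P ((a i).left j ⊗ₜ[k] (b i).right l) := by
    intro i _ j _
    rw [← (b i).eq, TensorProduct.tmul_sum, TensorProduct.tmul_sum, map_sum]
    exact Finset.sum_congr rfl fun l _ => hYtmul _ _ _ _
  have hR : ∀ i ∈ r.index,
      (∑ l ∈ (b i).index,
        Y (r.left i ⊗ₜ[k] ((b i).left l ⊗ₜ[k] Coalgebra.comul (R := k) ((b i).right l))))
        = (1:H) ⊗ₜ[k] P (r.left i ⊗ₜ[k] r.right i) := by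
    intro i _
    have coll := collapse3 (P ∘ₗ TensorProduct.mk k H H (r.left i)) (r.right i) (b i)
      (fun l => Coalgebra.Repr.arbitrary k ((b i).right l))
    calc ∑ l ∈ (b i).index,
        Y (r.left i ⊗ₜ[k] ((b i).left l ⊗ₜ[k] Coalgebra.comul (R := k) ((b i).right l)))
        = ∑ l ∈ (b i).index, ∑ m ∈ (Coalgebra.Repr.arbitrary k ((b i).right l)).index,
            (HopfAlgebra.antipode (R := k) ((b i).left l)
              * (Coalgebra.Repr.arbitrary k ((b i).right l)).left m)
              ⊗ₜ[k] (P ∘ₗ TensorProduct.mk k H H (r.left i))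
                ((Coalgebra.Repr.arbitrary k ((b i).right l)).right m) := by
          refine Finset.sum_congr rfl fun l _ => ?_
          rw [← (Coalgebra.Repr.arbitrary k ((b i).right l)).eq]
          rw [TensorProduct.tmul_sum, TensorProduct.tmul_sum, map_sum]
          exact Finset.sum_congr rfl fun m _ => hYtmul _ _ _ _
      _ = (1:H) ⊗ₜ[k] (P ∘ₗ TensorProduct.mk k H H (r.left i)) (r.right i) := coll
      _ = (1:H) ⊗ₜ[k] P (r.left i ⊗ₜ[k] r.right i) := rfl
  calc ∑ i ∈ r.index, ∑ j ∈ (a i).index, ∑ l ∈ (b i).index,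
      (HopfAlgebra.antipode (R := k) ((a i).right j) * (b i).left l)
        ⊗ₜ[k] P ((a i).left j ⊗ₜ[k] (b i).right l)
      = ∑ i ∈ r.index, ∑ j ∈ (a i).index,
          Y ((a i).left j ⊗ₜ[k] ((a i).right j ⊗ₜ[k] Coalgebra.comul (R := k) (r.right i))) := by
        refine Finset.sum_congr rfl fun i hi => Finset.sum_congr rfl fun j hj => ?_
        rw [hL i hi j hj]
    _ = ∑ i ∈ r.index, ∑ l ∈ (b i).index,
          Y (r.left i ⊗ₜ[k] ((b i).left l ⊗ₜ[k] Coalgebra.comul (R := k) ((b i).right l))) :=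
        key
    _ = ∑ i ∈ r.index, (1:H) ⊗ₜ[k] P (r.left i ⊗ₜ[k] r.right i) := by
        refine Finset.sum_congr rfl fun i hi => hR i hi
    _ = (1:H) ⊗ₜ[k] P (Coalgebra.comul (R := k) h) := by
        rw [← r.eq, map_sum, TensorProduct.tmul_sum]

lemma comul_antipode_linear :
    (Coalgebra.comul (R := k) (A := H)) ∘ₗ HopfAlgebra.antipode k
      = TensorProduct.map (HopfAlgebra.antipode (R := k)) (HopfAlgebra.antipode (R := k))
          ∘ₗ (TensorProduct.comm k H H).toLinearMap ∘ₗ Coalgebra.comul := by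
  symm
  refine myconv_inv_unique (m := (Coalgebra.comul : H →ₗ[k] H ⊗[k] H)) ?_ ?_
  · ext h
    have r := Coalgebra.Repr.arbitrary k h
    have a : ∀ i : H × H, Coalgebra.Repr k (r.left i) (H × H) := fun i => Coalgebra.Repr.arbitrary k _
    have b : ∀ i : H × H, Coalgebra.Repr k (r.right i) (H × H) := fun i => Coalgebra.Repr.arbitrary k _
    rw [myconv_apply _ _ h r]
    have KL := fourLeg (LinearMap.mul' k H ∘ₗ rTensor H (HopfAlgebra.antipode (R := k))) h r a b
    calc ∑ i ∈ r.index,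
        (TensorProduct.map (HopfAlgebra.antipode (R := k)) (HopfAlgebra.antipode (R := k))
          ∘ₗ (TensorProduct.comm k H H).toLinearMap ∘ₗ Coalgebra.comul) (r.left i)
          * Coalgebra.comul (R := k) (r.right i)
        = ∑ i ∈ r.index, ∑ j ∈ (a i).index, ∑ l ∈ (b i).index,
            (HopfAlgebra.antipode (R := k) ((a i).right j) * (b i).left l)
              ⊗ₜ[k] (HopfAlgebra.antipode (R := k) ((a i).left j) * (b i).right l) := by
          refine Finset.sum_congr rfl fun i _ => ?_
          rw [comp_apply, comp_apply, ← (a i).eq, ← (b i).eq]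
          rw [map_sum, map_sum, Finset.sum_mul_sum]
          refine Finset.sum_congr rfl fun j _ => Finset.sum_congr rfl fun l _ => ?_
          simp only [LinearEquiv.coe_coe, comm_tmul, TensorProduct.map_tmul]
          rw [Algebra.TensorProduct.tmul_mul_tmul]
      _ = (1:H) ⊗ₜ[k] (LinearMap.mul' k H ∘ₗ rTensor H (HopfAlgebra.antipode (R := k)))
            (Coalgebra.comul (R := k) h) := by
          rw [← KL]
          refine Finset.sum_congr rfl fun i _ => Finset.sum_congr rfl fun j _ =>
            Finset.sum_congr rfl fun l _ => ?_
          rw [comp_apply, rTensor_tmul, mul'_apply]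
      _ = myconvOne h := by
          rw [comp_apply, HopfAlgebra.mul_antipode_rTensor_comul_apply, myconvOne_apply,
            Algebra.algebraMap_eq_smul_one (A := H), Algebra.algebraMap_eq_smul_one,
            Algebra.TensorProduct.one_def, TensorProduct.tmul_smul]
  · ext h
    have r := Coalgebra.Repr.arbitrary k h
    rw [myconv_apply _ _ h r]
    calc ∑ i ∈ r.index, Coalgebra.comul (R := k) (r.left i)
          * (Coalgebra.comul (R := k) ∘ₗ HopfAlgebra.antipode (R := k)) (r.right i)
        = ∑ i ∈ r.index, Coalgebra.comul (R := k)
            (r.left i * HopfAlgebra.antipode (R := k) (r.right i)) := by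
          refine Finset.sum_congr rfl fun i _ => ?_
          rw [comp_apply, Bialgebra.comul_mul]
      _ = Coalgebra.comul (R := k)
            (∑ i ∈ r.index, r.left i * HopfAlgebra.antipode (R := k) (r.right i)) := by
          rw [map_sum]
      _ = myconvOne h := by
          rw [HopfAlgebra.sum_mul_antipode_eq_smul r, map_smul, Bialgebra.comul_one,
            myconvOne_apply, Algebra.algebraMap_eq_smul_one]

lemma comul_antipode (h : H) :
    Coalgebra.comul (R := k) (HopfAlgebra.antipode (R := k) (A := H) h)
      = TensorProduct.map (HopfAlgebra.antipode (R := k)) (HopfAlgebra.antipode (R := k))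
          ((TensorProduct.comm k H H) (Coalgebra.comul (R := k) h)) := by
  have := congr($(comul_antipode_linear (k := k) (H := H)) h)
  simpa using this

/-- A representation of the coproduct of `S h` from one of `h`. -/
noncomputable def reprAntipode {ι : Type*} {h : H} (r : Coalgebra.Repr k h ι) :
    Coalgebra.Repr k (HopfAlgebra.antipode (R := k) (A := H) h) ι where
  index := r.index
  left := fun i => HopfAlgebra.antipode (R := k) (r.right i)
  right := fun i => HopfAlgebra.antipode (R := k) (r.left i)
  eq := by
    rw [comul_antipode, ← r.eq, map_sum, map_sum]
    refine Finset.sum_congr rfl fun i _ => ?_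
    rw [comm_tmul, TensorProduct.map_tmul]

end HopfAux2

section DefLemmas

variable {k H M : Type} [Field k] [Ring H] [HopfAlgebra k H]
  [AddCommGroup M] [Module k M]

lemma adActM_tmul {ι : Type*} (lact : H ⊗[k] M →ₗ[k] M) (ract : M ⊗[k] H →ₗ[k] M) (m : M) (h : H)
    (r : Coalgebra.Repr k h ι) :
    adActM k H M lact ract (m ⊗ₜ[k] h)
      = ∑ i ∈ r.index,
          ract (lact (HopfAlgebra.antipode (R := k) (r.left i) ⊗ₜ[k] m) ⊗ₜ[k] r.right i) := by
  simp only [adActM, comp_apply, LinearEquiv.coe_coe, lTensor_tmul]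
  rw [← r.eq]
  simp only [map_sum, TensorProduct.tmul_sum, TensorProduct.sum_tmul]
  refine Finset.sum_congr rfl fun i _ => ?_
  simp only [lTensor_tmul, rTensor_tmul, TensorProduct.assoc_symm_tmul, comp_apply,
    LinearEquiv.coe_coe, comm_tmul]

lemma adActH_tmul {ι : Type*} (g h : H) (r : Coalgebra.Repr k h ι) :
    adActH k H (g ⊗ₜ[k] h)
      = ∑ i ∈ r.index,
          (HopfAlgebra.antipode (R := k) (r.left i) * g) * r.right i := by
  rw [adActH, adActM_tmul (LinearMap.mul' k H) (LinearMap.mul' k H) g h r]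
  simp only [mul'_apply]

lemma diagLHM_tmul {ι : Type*} (lact : H ⊗[k] M →ₗ[k] M) (g x : H) (n : M)
    (r : Coalgebra.Repr k g ι) :
    diagLHM k H M lact (g ⊗ₜ[k] (x ⊗ₜ[k] n))
      = ∑ i ∈ r.index, (r.left i * x) ⊗ₜ[k] lact (r.right i ⊗ₜ[k] n) := by
  simp only [diagLHM, comp_apply, LinearEquiv.coe_coe, rTensor_tmul]
  rw [← r.eq]
  simp only [map_sum, TensorProduct.tmul_sum, TensorProduct.sum_tmul]
  refine Finset.sum_congr rfl fun i _ => ?_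
  simp only [tensorTensorTensorComm_tmul, TensorProduct.map_tmul, mul'_apply]

lemma diagRHM_tmul {ι : Type*} (ract : M ⊗[k] H →ₗ[k] M) (x : H) (n : M) (b : H)
    (r : Coalgebra.Repr k b ι) :
    diagRHM k H M ract ((x ⊗ₜ[k] n) ⊗ₜ[k] b)
      = ∑ i ∈ r.index, (x * r.left i) ⊗ₜ[k] ract (n ⊗ₜ[k] r.right i) := by
  simp only [diagRHM, comp_apply, LinearEquiv.coe_coe, lTensor_tmul]
  rw [← r.eq]
  simp only [map_sum, TensorProduct.tmul_sum, TensorProduct.sum_tmul]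
  refine Finset.sum_congr rfl fun i _ => ?_
  simp only [tensorTensorTensorComm_tmul, TensorProduct.map_tmul, mul'_apply]

/-- Representation of the coproduct of a product. -/
noncomputable def reprMul {ι κ : Type*} {a c : H} (ra : Coalgebra.Repr k a ι)
    (rc : Coalgebra.Repr k c κ) :
    Coalgebra.Repr k (a * c) (ι × κ) where
  index := ra.index ×ˢ rc.index
  left := fun p => ra.left p.1 * rc.left p.2
  right := fun p => ra.right p.1 * rc.right p.2
  eq := by
    rw [Bialgebra.comul_mul, ← ra.eq, ← rc.eq, Finset.sum_mul_sum, Finset.sum_product]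
    simp [Algebra.TensorProduct.tmul_mul_tmul]

end DefLemmas


set_option maxHeartbeats 2000000 in
/-- (Main theorem.)  Let `H` be a Hopf algebra, `M` an
`H`-tetramodule and `f : M → H` an `H`-bimodule map which is a coderivation, i.e.
`f : M → H` is a Hopf algebra object in the Loday–Pirashvili category of linear maps.
Then (1) `f` restricts to a morphism `f̃ : ⁱⁿᵛM → ker ε` of Yetter–Drinfel'd modules
over `H`, where `ⁱⁿᵛM` carries the right adjoint action `m ⊳ h = S(h₍₁₎) m h₍₂₎` and
the right coaction restricted from `M`, and `ker ε` carries the right adjoint action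
and the coaction `Δ̃(h) = h₍₁₎ ⊗ h₍₂₎ − 1 ⊗ h`; and (2) `x ◁ y := x ⊳ f̃(y)` together
with the Yetter–Drinfel'd braiding `τ(x ⊗ y) = y₍₀₎ ⊗ x ⊳ y₍₁₎` turns `ⁱⁿᵛM` into a
braided Leibniz algebra: `(x ◁ y) ◁ z = x ◁ (y ◁ z) + (x ◁ z⟨1⟩) ◁ y⟨2⟩`. -/
theorem stmt16 (k H M : Type) [Field k] [Ring H] [HopfAlgebra k H]
    [AddCommGroup M] [Module k M]
    (lact : H ⊗[k] M →ₗ[k] M) (ract : M ⊗[k] H →ₗ[k] M)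
    (lam : M →ₗ[k] H ⊗[k] M) (ρ : M →ₗ[k] M ⊗[k] H)
    -- M is an H-bimodule
    (h_lact_one : ∀ m : M, lact ((1 : H) ⊗ₜ m) = m)
    (h_lact_mul : ∀ (a b : H) (m : M), lact (a ⊗ₜ lact (b ⊗ₜ m)) = lact ((a * b) ⊗ₜ m))
    (h_ract_one : ∀ m : M, ract (m ⊗ₜ (1 : H)) = m)
    (h_ract_mul : ∀ (m : M) (a b : H), ract (ract (m ⊗ₜ a) ⊗ₜ b) = ract (m ⊗ₜ (a * b)))
    (h_commute : ∀ (a : H) (m : M) (b : H),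
      ract (lact (a ⊗ₜ m) ⊗ₜ b) = lact (a ⊗ₜ ract (m ⊗ₜ b)))
    -- M is an H-bicomodule
    (hl_counit : ∀ m : M,
      (TensorProduct.lid k M) ((rTensor M (Coalgebra.counit (R := k))) (lam m)) = m)
    (hl_coassoc : ∀ m : M,
      (TensorProduct.assoc k H H M) ((rTensor M (Coalgebra.comul (R := k))) (lam m))
        = (lTensor H lam) (lam m))
    (hr_counit : ∀ m : M,
      (TensorProduct.rid k M) ((lTensor M (Coalgebra.counit (R := k))) (ρ m)) = m)
    (hr_coassoc : ∀ m : M,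
      (TensorProduct.assoc k M H H) ((rTensor H ρ) (ρ m))
        = (lTensor M (Coalgebra.comul (R := k))) (ρ m))
    (hbicompat : ∀ m : M,
      (TensorProduct.assoc k H M H) ((rTensor H lam) (ρ m)) = (lTensor H ρ) (lam m))
    -- the coactions are bimodule maps (M is a tetramodule)
    (hcl_l : lam ∘ₗ lact = diagLHM k H M lact ∘ₗ lTensor H lam)
    (hcl_r : lam ∘ₗ ract = diagRHM k H M ract ∘ₗ rTensor H lam)
    (hcr_l : ρ ∘ₗ lact = diagLMH k H M lact ∘ₗ lTensor H ρ)
    (hcr_r : ρ ∘ₗ ract = diagRMH k H M ract ∘ₗ rTensor H ρ)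
    -- f is an H-bimodule map and a coderivation
    (f : M →ₗ[k] H)
    (h_fl : ∀ (a : H) (m : M), f (lact (a ⊗ₜ m)) = a * f m)
    (h_fr : ∀ (m : M) (a : H), f (ract (m ⊗ₜ a)) = f m * a)
    (hf : ∀ m : M,
      Coalgebra.comul (R := k) (f m) = (lTensor H f) (lam m) + (rTensor H f) (ρ m)) :
    -- f̃ takes values in ker ε
    (∀ m : M, lam m = (1 : H) ⊗ₜ[k] m → Coalgebra.counit (R := k) (f m) = 0) ∧
    -- the adjoint action preserves the left-invariants
    (∀ (m : M) (h : H), lam m = (1 : H) ⊗ₜ[k] m →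
      lam (adActM k H M lact ract (m ⊗ₜ h))
        = (1 : H) ⊗ₜ[k] adActM k H M lact ract (m ⊗ₜ h)) ∧
    -- f̃ is equivariant for the right adjoint actions
    (∀ (m : M) (h : H), lam m = (1 : H) ⊗ₜ[k] m →
      f (adActM k H M lact ract (m ⊗ₜ h)) = adActH k H (f m ⊗ₜ h)) ∧
    -- f̃ is right H-colinear
    (∀ m : M, lam m = (1 : H) ⊗ₜ[k] m →
      Coalgebra.comul (R := k) (f m) - (1 : H) ⊗ₜ[k] f m = (rTensor H f) (ρ m)) ∧
    -- the coaction of M preserves the left-invariants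
    (∀ m : M, lam m = (1 : H) ⊗ₜ[k] m →
      ρ m ∈ LinearMap.range
        (rTensor H (LinearMap.ker (lam - (TensorProduct.mk k H M) 1)).subtype)) ∧
    -- the braided Leibniz identity on the left-invariants
    (∀ x y z : M,
      lam x = (1 : H) ⊗ₜ[k] x → lam y = (1 : H) ⊗ₜ[k] y → lam z = (1 : H) ⊗ₜ[k] z →
      adActM k H M lact ract (adActM k H M lact ract (x ⊗ₜ f y) ⊗ₜ f z)
        = adActM k H M lact ract (x ⊗ₜ f (adActM k H M lact ract (y ⊗ₜ f z)))
          + (adActM k H M lact ract ∘ₗ TensorProduct.map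
              (adActM k H M lact ract ∘ₗ (TensorProduct.mk k M H) x ∘ₗ f)
              (f ∘ₗ adActM k H M lact ract ∘ₗ (TensorProduct.mk k M H) y)) (ρ z)) := by
  classical
  have hlam_lact : ∀ (g : H) (u : M),
      lam (lact (g ⊗ₜ[k] u)) = diagLHM k H M lact (g ⊗ₜ[k] lam u) := by
    intro g u
    have h := congr($hcl_l (g ⊗ₜ[k] u))
    simpa using h
  have hlam_ract : ∀ (u : M) (v : H),
      lam (ract (u ⊗ₜ[k] v)) = diagRHM k H M ract (lam u ⊗ₜ[k] v) := by
    intro u v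
    have h := congr($hcl_r (u ⊗ₜ[k] v))
    simpa using h
  -- Part 1 : f̃ takes values in ker ε
  have part1 : ∀ m : M, lam m = (1 : H) ⊗ₜ[k] m → Coalgebra.counit (R := k) (f m) = 0 := by
    intro m hm
    have auxMH : ∀ t : M ⊗[k] H,
        (TensorProduct.rid k H) ((lTensor H (Coalgebra.counit (R := k))) ((rTensor H f) t))
          = f ((TensorProduct.rid k M) ((lTensor M (Coalgebra.counit (R := k))) t)) := by
      intro t
      induction t using TensorProduct.induction_on with
      | zero => simp
      | tmul n h => simp
      | add s t hs ht => simp only [map_add, hs, ht]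
    have happ := congrArg
      (fun t => (TensorProduct.rid k H) ((lTensor H (Coalgebra.counit (R := k))) t)) (hf m)
    simp only [map_add] at happ
    rw [Coalgebra.lTensor_counit_comul, hm, auxMH (ρ m), hr_counit m] at happ
    simp only [lTensor_tmul, TensorProduct.rid_tmul, one_smul] at happ
    have h0 : (Coalgebra.counit (R := k) (f m)) • (1 : H) = 0 := right_eq_add.mp happ
    have h1 := congrArg (Coalgebra.counit (R := k)) h0
    simpa [Bialgebra.counit_one] using h1
  -- Part 3 : equivariance of f (holds without invariance)
  have part3 : ∀ (m : M) (h : H),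
      f (adActM k H M lact ract (m ⊗ₜ[k] h)) = adActH k H (f m ⊗ₜ[k] h) := by
    intro m h
    have r := Coalgebra.Repr.arbitrary k h
    rw [adActM_tmul lact ract m h r, adActH_tmul (f m) h r, map_sum]
    refine Finset.sum_congr rfl fun i _ => ?_
    rw [h_fr, h_fl]
  -- Part 2 : the adjoint action preserves the left-invariants
  have part2 : ∀ (m : M) (h : H), lam m = (1 : H) ⊗ₜ[k] m →
      lam (adActM k H M lact ract (m ⊗ₜ[k] h))
        = (1 : H) ⊗ₜ[k] adActM k H M lact ract (m ⊗ₜ[k] h) := by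
    intro m h hm
    have r := Coalgebra.Repr.arbitrary k h
    have a : ∀ i : H × H, Coalgebra.Repr k (r.left i) (H × H) := fun i => Coalgebra.Repr.arbitrary k _
    have b : ∀ i : H × H, Coalgebra.Repr k (r.right i) (H × H) := fun i => Coalgebra.Repr.arbitrary k _
    set P : H ⊗[k] H →ₗ[k] M :=
      ract ∘ₗ rTensor H (lact ∘ₗ rTensor M (HopfAlgebra.antipode (R := k))
        ∘ₗ (TensorProduct.mk k H M).flip m) with hP
    have hPt : ∀ (u d : H), P (u ⊗ₜ[k] d)
        = ract (lact (HopfAlgebra.antipode (R := k) u ⊗ₜ[k] m) ⊗ₜ[k] d) := by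
      intro u d
      simp [hP]
    have hKL := fourLeg P h r a b
    calc lam (adActM k H M lact ract (m ⊗ₜ[k] h))
        = ∑ i ∈ r.index, lam (ract (lact (HopfAlgebra.antipode (R := k) (r.left i) ⊗ₜ[k] m)
            ⊗ₜ[k] r.right i)) := by
          rw [adActM_tmul lact ract m h r, map_sum]
      _ = ∑ i ∈ r.index, ∑ j ∈ (a i).index, ∑ l ∈ (b i).index,
            (HopfAlgebra.antipode (R := k) ((a i).right j) * (b i).left l)
              ⊗ₜ[k] P ((a i).left j ⊗ₜ[k] (b i).right l) := by
          refine Finset.sum_congr rfl fun i _ => ?_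
          rw [hlam_ract, hlam_lact, hm,
            diagLHM_tmul lact (HopfAlgebra.antipode (R := k) (r.left i)) 1 m
              (reprAntipode (a i))]
          rw [TensorProduct.sum_tmul, map_sum]
          refine Finset.sum_congr rfl fun j _ => ?_
          rw [diagRHM_tmul ract _ _ _ (b i)]
          refine Finset.sum_congr rfl fun l _ => ?_
          rw [hPt]
          simp [reprAntipode, mul_one]
      _ = (1 : H) ⊗ₜ[k] P (Coalgebra.comul (R := k) h) := hKL
      _ = (1 : H) ⊗ₜ[k] adActM k H M lact ract (m ⊗ₜ[k] h) := by
          rw [adActM_tmul lact ract m h r, ← r.eq, map_sum]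
          refine congrArg (fun t => (1:H) ⊗ₜ[k] t) ?_
          exact Finset.sum_congr rfl fun i _ => hPt _ _
  -- Part 4 : colinearity
  have part4 : ∀ m : M, lam m = (1 : H) ⊗ₜ[k] m →
      Coalgebra.comul (R := k) (f m) - (1 : H) ⊗ₜ[k] f m = (rTensor H f) (ρ m) := by
    intro m hm
    rw [hf m, hm, lTensor_tmul]
    exact add_sub_cancel_left _ _
  -- Part 5 : the coaction preserves the left-invariants
  have part5 : ∀ m : M, lam m = (1 : H) ⊗ₜ[k] m →
      ρ m ∈ LinearMap.range
        (rTensor H (LinearMap.ker (lam - (TensorProduct.mk k H M) 1)).subtype) := by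
    intro m hm
    set g : M →ₗ[k] H ⊗[k] M := lam - (TensorProduct.mk k H M) 1 with hg
    have hone : ∀ t : M ⊗[k] H,
        rTensor H ((TensorProduct.mk k H M) 1) t
          = (TensorProduct.assoc k H M H).symm ((1 : H) ⊗ₜ[k] t) := by
      intro t
      induction t using TensorProduct.induction_on with
      | zero => simp
      | tmul n h => simp
      | add s t hs ht => simp only [map_add, TensorProduct.tmul_add, hs, ht]
    have h1 : rTensor H g (ρ m) = 0 := by
      have hb := hbicompat m
      rw [hm, lTensor_tmul] at hb
      have h2 : rTensor H lam (ρ m)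
          = (TensorProduct.assoc k H M H).symm ((1 : H) ⊗ₜ[k] ρ m) := by
        rw [← hb, LinearEquiv.symm_apply_apply]
      rw [hg, rTensor_sub]
      show rTensor H lam (ρ m) - rTensor H ((TensorProduct.mk k H M) 1) (ρ m) = 0
      rw [h2, hone (ρ m), sub_self]
    have hexact : Function.Exact (rTensor H (LinearMap.ker g).subtype) (rTensor H g) :=
      Module.Flat.rTensor_exact H (LinearMap.exact_subtype_ker_map g)
    obtain ⟨x, hx⟩ := (hexact (ρ m)).mp h1
    exact ⟨x, hx⟩
  -- the adjoint action is a right action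
  have L1 : ∀ (x : M) (p q : H),
      adActM k H M lact ract (adActM k H M lact ract (x ⊗ₜ[k] p) ⊗ₜ[k] q)
        = adActM k H M lact ract (x ⊗ₜ[k] (p * q)) := by
    intro x p q
    have rp := Coalgebra.Repr.arbitrary k p
    have rq := Coalgebra.Repr.arbitrary k q
    calc adActM k H M lact ract (adActM k H M lact ract (x ⊗ₜ[k] p) ⊗ₜ[k] q)
        = ∑ j ∈ rq.index, ∑ i ∈ rp.index,
            ract (lact ((HopfAlgebra.antipode (R := k) (rp.left i * rq.left j)) ⊗ₜ[k] x)
              ⊗ₜ[k] (rp.right i * rq.right j)) := by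
          rw [adActM_tmul lact ract _ q rq]
          refine Finset.sum_congr rfl fun j _ => ?_
          rw [adActM_tmul lact ract x p rp, TensorProduct.tmul_sum, map_sum,
            TensorProduct.sum_tmul, map_sum]
          refine Finset.sum_congr rfl fun i _ => ?_
          rw [← h_commute, h_ract_mul, h_lact_mul, ← antipode_mul]
      _ = adActM k H M lact ract (x ⊗ₜ[k] (p * q)) := by
          rw [adActM_tmul lact ract x (p * q) (reprMul rp rq)]
          simp only [reprMul]
          rw [Finset.sum_product]
          rw [Finset.sum_comm]
  -- the key identity in H
  have L2 : ∀ (g w : H),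
      (LinearMap.mul' k H) ((lTensor H (adActH k H ∘ₗ (TensorProduct.mk k H H) g))
        (Coalgebra.comul (R := k) w)) = g * w := by
    intro g w
    have r := Coalgebra.Repr.arbitrary k w
    have c : ∀ i : H × H, Coalgebra.Repr k (r.right i) (H × H) := fun i => Coalgebra.Repr.arbitrary k _
    have d : ∀ i : H × H, Coalgebra.Repr k (r.left i) (H × H) := fun i => Coalgebra.Repr.arbitrary k _
    have key := Coalgebra.sum_tmul_tmul_eq r d c
    apply_fun (LinearMap.mul' k H ∘ₗ lTensor H (LinearMap.mul' k H
        ∘ₗ rTensor H (LinearMap.mulRight k g ∘ₗ HopfAlgebra.antipode (R := k)))) at key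
    simp only [map_sum, comp_apply, lTensor_tmul, rTensor_tmul, mul'_apply,
      LinearMap.mulRight_apply] at key
    calc (LinearMap.mul' k H) ((lTensor H (adActH k H ∘ₗ (TensorProduct.mk k H H) g))
          (Coalgebra.comul (R := k) w))
        = ∑ i ∈ r.index, ∑ j ∈ (c i).index,
            r.left i * ((HopfAlgebra.antipode (R := k) ((c i).left j) * g) * (c i).right j) := by
          rw [← r.eq]
          simp only [map_sum, lTensor_tmul, comp_apply, TensorProduct.mk_apply, mul'_apply]
          refine Finset.sum_congr rfl fun i _ => ?_
          rw [adActH_tmul g (r.right i) (c i), Finset.mul_sum]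
      _ = ∑ i ∈ r.index, ∑ j ∈ (d i).index,
            (d i).left j * ((HopfAlgebra.antipode (R := k) ((d i).right j) * g) * r.right i) :=
          key.symm
      _ = ∑ i ∈ r.index, Coalgebra.counit (R := k) (r.left i) • (g * r.right i) := by
          refine Finset.sum_congr rfl fun i _ => ?_
          calc ∑ j ∈ (d i).index, (d i).left j
                * ((HopfAlgebra.antipode (R := k) ((d i).right j) * g) * r.right i)
              = (∑ j ∈ (d i).index, (d i).left j
                  * HopfAlgebra.antipode (R := k) ((d i).right j)) * (g * r.right i) := by
                rw [Finset.sum_mul]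
                refine Finset.sum_congr rfl fun j _ => ?_
                rw [mul_assoc, mul_assoc]
            _ = Coalgebra.counit (R := k) (r.left i) • (g * r.right i) := by
                rw [HopfAlgebra.sum_mul_antipode_eq_smul (d i), smul_mul_assoc, one_mul]
      _ = g * w := by
          calc ∑ i ∈ r.index, Coalgebra.counit (R := k) (r.left i) • (g * r.right i)
              = g * ∑ i ∈ r.index, Coalgebra.counit (R := k) (r.left i) • r.right i := by
                rw [Finset.mul_sum]
                exact Finset.sum_congr rfl fun i _ => (mul_smul_comm _ _ _).symm
            _ = g * w := by rw [sum_counit_smul]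
  -- Part 6 : the braided Leibniz rule
  have part6 : ∀ x y z : M,
      lam x = (1 : H) ⊗ₜ[k] x → lam y = (1 : H) ⊗ₜ[k] y → lam z = (1 : H) ⊗ₜ[k] z →
      adActM k H M lact ract (adActM k H M lact ract (x ⊗ₜ[k] f y) ⊗ₜ[k] f z)
        = adActM k H M lact ract (x ⊗ₜ[k] f (adActM k H M lact ract (y ⊗ₜ[k] f z)))
          + (adActM k H M lact ract ∘ₗ TensorProduct.map
              (adActM k H M lact ract ∘ₗ (TensorProduct.mk k M H) x ∘ₗ f)
              (f ∘ₗ adActM k H M lact ract ∘ₗ (TensorProduct.mk k M H) y)) (ρ z) := by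
    intro x y z hx hy hz
    set N : H ⊗[k] H →ₗ[k] H :=
      LinearMap.mul' k H ∘ₗ lTensor H (adActH k H ∘ₗ (TensorProduct.mk k H H) (f y)) with hN
    have hterm2 : ∀ t : M ⊗[k] H,
        (adActM k H M lact ract ∘ₗ TensorProduct.map
            (adActM k H M lact ract ∘ₗ (TensorProduct.mk k M H) x ∘ₗ f)
            (f ∘ₗ adActM k H M lact ract ∘ₗ (TensorProduct.mk k M H) y)) t
          = adActM k H M lact ract (x ⊗ₜ[k] N (rTensor H f t)) := by
      intro t
      induction t using TensorProduct.induction_on with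
      | zero => simp [TensorProduct.tmul_zero]
      | tmul z0 z1 =>
        simp only [comp_apply, TensorProduct.map_tmul, TensorProduct.mk_apply, rTensor_tmul]
        rw [part3 y z1, L1]
        rw [hN]
        simp only [comp_apply, lTensor_tmul, TensorProduct.mk_apply, mul'_apply]
      | add s t hs ht =>
        simp only [map_add, hs, ht, TensorProduct.tmul_add]
    have hcol : Coalgebra.comul (R := k) (f z)
        = (1 : H) ⊗ₜ[k] f z + rTensor H f (ρ z) := by
      rw [hf z, hz, lTensor_tmul]
    have hkey := congrArg N hcol
    rw [map_add] at hkey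
    have hNw : N (Coalgebra.comul (R := k) (f z)) = f y * f z := L2 (f y) (f z)
    have hN1 : N ((1 : H) ⊗ₜ[k] f z) = adActH k H (f y ⊗ₜ[k] f z) := by
      rw [hN]
      simp only [comp_apply, lTensor_tmul, TensorProduct.mk_apply, mul'_apply, one_mul]
    have hsum : adActH k H (f y ⊗ₜ[k] f z) + N (rTensor H f (ρ z)) = f y * f z := by
      rw [← hN1, ← hkey]
      exact hNw
    rw [hterm2 (ρ z), L1, part3 y (f z), ← map_add, ← TensorProduct.tmul_add, hsum]
  exact ⟨part1, part2, fun m h _ => part3 m h, part4, part5, part6⟩
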